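/- For integers d ≥ 2 and k ≥ 2, the d-Fibonacci digraph F(d,k) is an induced subdigraph of the de Bruijn digraph B(d,k): for all vertices x, y of F(d,k), there is an arc from x to y in F(d,k) if and only if y_i = x_{i+1} for all 1 ≤ i ≤ k−1 (the de Bruijn adjacency). -/
import Mathlib


/-- A vertex of the d-Fibonacci digraph F(d,k): a sequence x : Fin k → ZMod d
such that whenever a digit is nonzero, the next digit is its successor mod d. -/
def fibIsVertex (d k : ℕ) (x : Fin k → ZMod d) : Prop :=
  ∀ (i : ℕ) (h : i + 1 < k),
    x ⟨i, Nat.lt_of_succ_lt h⟩ ≠ 0 →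
      x ⟨i + 1, h⟩ = x ⟨i, Nat.lt_of_succ_lt h⟩ + 1

/-- The arc relation of F(d,k): y is the left shift of x, and if the last digit
of x is nonzero then the last digit of y is its successor mod d. -/
def fibArc (d k : ℕ) (x y : Fin k → ZMod d) : Prop :=
  (∀ (i : ℕ) (h : i + 1 < k), y ⟨i, Nat.lt_of_succ_lt h⟩ = x ⟨i + 1, h⟩) ∧
  (∀ h : 0 < k, x ⟨k - 1, Nat.sub_lt h Nat.one_pos⟩ ≠ 0 →
    y ⟨k - 1, Nat.sub_lt h Nat.one_pos⟩ = x ⟨k - 1, Nat.sub_lt h Nat.one_pos⟩ + 1)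

/-- F(d,k) is an induced subdigraph of the de Bruijn digraph B(d,k):
for vertices x, y of F(d,k), there is an arc x → y in F(d,k) iff the de Bruijn
adjacency y_i = x_{i+1} holds. -/
theorem fib_induced_deBruijn (d k : ℕ) (hd : 2 ≤ d) (hk : 2 ≤ k)
    (x y : Fin k → ZMod d) (hx : fibIsVertex d k x) (hy : fibIsVertex d k y) :
    fibArc d k x y ↔
      ∀ (i : ℕ) (h : i + 1 < k), y ⟨i, Nat.lt_of_succ_lt h⟩ = x ⟨i + 1, h⟩ := by
  constructor
  · exact fun h => h.1
  · intro hsh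
    refine ⟨hsh, fun h0 hne => ?_⟩
    have h2 : k - 2 + 1 < k := by omega
    have e : k - 2 + 1 = k - 1 := by omega
    have hne' : y ⟨k - 2, Nat.lt_of_succ_lt h2⟩ ≠ 0 := by
      rw [hsh (k - 2) h2]
      convert hne using 2; exact Fin.mk_eq_mk.mpr e
    have := hy (k - 2) h2 hne'
    rw [hsh (k - 2) h2] at this
    convert this using 3 <;> first | exact e.symm | exact Fin.mk_eq_mk.mpr e.symm
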